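/- Let T be an integral domain, K a subring of T that is a field, and M a nonzero maximal ideal of T such that T = K + M (every element of T is the sum of an element of K and an element of M). Let k be a subfield of K and set R = k + M, a subring of T. If M contains an irreducible element of T, then R is a U-FFD if and only if T is a U-FFD and the quotient group K^×/k^× of the multiplicative group of nonzero elements of K by the subgroup of nonzero elements of k is finite. -/

import Mathlib

/-- The set of factorizations of `a`: multisets of atoms (irreducible elements), counted up
to associates, whose product is associated to `a`. -/
def FactorizationsOf {α : Type*} [CommMonoid α] (a : α) : Set (Multiset (Associates α)) :=
  {s | (∀ p ∈ s, Irreducible p) ∧ s.prod = Associates.mk a}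

/-- An element is atomic if it is a unit or a finite product of atoms; equivalently, some
finite multiset of atoms has product associated to it. -/
def IsAtomicElem {α : Type*} [CommMonoid α] (a : α) : Prop :=
  ∃ s : Multiset α, (∀ p ∈ s, Irreducible p) ∧ Associated s.prod a

/-- An integral domain is an unrestricted finite factorization domain (U-FFD) if every
nonzero atomic element has only finitely many factorizations. -/
def IsUFFD (R : Type*) [CommRing R] : Prop :=
  ∀ a : R, a ≠ 0 → IsAtomicElem a → (FactorizationsOf a).Finite

set_option linter.unusedSectionVars false

section Aux

variable {T : Type*} [CommRing T] [IsDomain T]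

/-- inverse in a subring which is a field -/
lemma sub_field_inv {S : Subring T} (hS : IsField S) {a : T} (ha : a ∈ S) (ha0 : a ≠ 0) :
    ∃ b ∈ S, a * b = 1 := by
  obtain ⟨b, hb⟩ := hS.mul_inv_cancel (a := ⟨a, ha⟩) (by
    intro h; exact ha0 (by simpa using congrArg Subtype.val h))
  exact ⟨b.1, b.2, by simpa using congrArg Subtype.val hb⟩

variable {K : Subring T} {M : Ideal T} {k R : Subring T}

/-- K ∩ M = 0 -/
lemma K_inter_M (hK : IsField K) (hMmax : M.IsMaximal) {a : T} (haK : a ∈ K) (haM : a ∈ M) :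
    a = 0 := by
  by_contra h
  obtain ⟨b, -, hab⟩ := sub_field_inv hK haK h
  exact hMmax.ne_top (Ideal.eq_top_iff_one M |>.mpr (hab ▸ Ideal.mul_mem_right b M haM))

/-- uniqueness of decomposition -/
lemma KM_uniq (hK : IsField K) (hMmax : M.IsMaximal) {a a' m m' : T}
    (ha : a ∈ K) (ha' : a' ∈ K) (hm : m ∈ M) (hm' : m' ∈ M)
    (h : a + m = a' + m') : a = a' := by
  have h1 : a - a' ∈ K := K.sub_mem ha ha'
  have h2 : a - a' ∈ M := by
    have : a - a' = m' - m := by linear_combination h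
    rw [this]; exact M.sub_mem hm' hm
  exact sub_eq_zero.mp (K_inter_M hK hMmax h1 h2)

lemma unit_not_mem_M (hMmax : M.IsMaximal) {x : T} (hx : IsUnit x) : x ∉ M := by
  intro hxM
  obtain ⟨y, hy⟩ := isUnit_iff_exists_inv.mp hx
  exact hMmax.ne_top (Ideal.eq_top_iff_one M |>.mpr (hy ▸ Ideal.mul_mem_right y M hxM))

variable (hK : IsField K) (hMmax : M.IsMaximal)
  (hTKM : ∀ t : T, ∃ a ∈ K, ∃ m ∈ M, t = a + m)
  (hkK : k ≤ K) (hk : IsField k)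
  (hR : ∀ x : T, x ∈ R ↔ ∃ a ∈ k, ∃ m ∈ M, x = a + m)

include hR in
lemma M_le_R : ∀ {m : T}, m ∈ M → m ∈ R := fun {m} hm =>
  (hR m).mpr ⟨0, k.zero_mem, m, hm, by ring⟩

include hR in
lemma k_le_R : ∀ {a : T}, a ∈ k → a ∈ R := fun {a} ha =>
  (hR a).mpr ⟨a, ha, 0, M.zero_mem, by ring⟩

include hK hMmax hkK hR in
lemma mem_k_of_mem_K_R {x : T} (hxR : x ∈ R) (hxK : x ∈ K) : x ∈ k := by
  obtain ⟨a, hak, m, hm, hx⟩ := (hR x).mp hxR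
  have hm0 : m = 0 := K_inter_M hK hMmax (by
    have : m = x - a := by rw [hx]; ring
    rw [this]; exact K.sub_mem hxK (hkK hak)) hm
  rw [hx, hm0, add_zero]; exact hak

include hK hMmax hkK hk hTKM hR in
/-- L4: a unit of T lying in R is a unit of R -/
lemma unit_of_R (x : R) (hx : IsUnit (x : T)) : IsUnit x := by
  obtain ⟨y, hxy⟩ := isUnit_iff_exists_inv.mp hx
  obtain ⟨a, hak, m, hm, hxd⟩ := (hR x).mp x.2
  have ha0 : a ≠ 0 := by
    rintro rfl
    exact unit_not_mem_M hMmax hx (by rw [hxd, zero_add]; exact hm)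
  obtain ⟨b, hbK, m', hm', hyd⟩ := hTKM y
  have hab : a * b = 1 := by
    have key : a * b + (a * m' + m * b + m * m') = 1 + 0 := by
      rw [add_zero, ← hxy, hxd, hyd]; ring
    exact KM_uniq hK hMmax (K.mul_mem (hkK hak) hbK) K.one_mem
      (M.add_mem (M.add_mem (M.mul_mem_left a hm') (M.mul_mem_right b hm))
        (M.mul_mem_right m' hm)) M.zero_mem key
  obtain ⟨c, hck, hac⟩ := sub_field_inv hk hak ha0
  have hbc : b = c := mul_left_cancel₀ ha0 (hab.trans hac.symm)
  have hyR : y ∈ R := (hR y).mpr ⟨b, hbc ▸ hck, m', hm', hyd⟩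
  exact isUnit_iff_exists_inv.mpr ⟨⟨y, hyR⟩, Subtype.ext (by simpa using hxy)⟩

include hK hMmax hTKM in
/-- decomposition of elements outside M -/
lemma not_mem_M_decomp {y : T} (hy : y ∉ M) :
    ∃ c ∈ K, c ≠ 0 ∧ ∃ m ∈ M, y = c * (1 + m) := by
  obtain ⟨c, hcK, m₀, hm₀, hyd⟩ := hTKM y
  have hc0 : c ≠ 0 := by
    rintro rfl; exact hy (by rw [hyd, zero_add]; exact hm₀)
  obtain ⟨c', hc'K, hcc'⟩ := sub_field_inv hK hcK hc0
  refine ⟨c, hcK, hc0, c' * m₀, M.mul_mem_left c' hm₀, ?_⟩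
  have : c * (1 + c' * m₀) = c + (c * c') * m₀ := by ring
  rw [hyd, this, hcc', one_mul]

include hK hMmax hkK hk hTKM hR in
/-- decomposition of a unit of T -/
lemma unit_decomp {w : T} (hw : IsUnit w) :
    ∃ c ∈ K, c ≠ 0 ∧ ∃ v : R, IsUnit v ∧ w = c * (v : T) := by
  obtain ⟨c, hcK, hc0, m, hm, hwd⟩ := not_mem_M_decomp hK hMmax hTKM (unit_not_mem_M hMmax hw)
  have h1m : (1 : T) + m ∈ R := (hR _).mpr ⟨1, k.one_mem, m, hm, rfl⟩
  have hunit : IsUnit ((1 : T) + m) := by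
    obtain ⟨c', hc'K, hcc'⟩ := sub_field_inv hK hcK hc0
    obtain ⟨u, hu⟩ := isUnit_iff_exists_inv.mp hw
    exact isUnit_iff_exists_inv.mpr ⟨c * u, by
      calc (1+m) * (c * u) = (c * (1+m)) * u := by ring
      _ = w * u := by rw [hwd]
      _ = 1 := hu⟩
  exact ⟨c, hcK, hc0, ⟨_, h1m⟩, unit_of_R hK hMmax hTKM hkK hk hR _ hunit, hwd⟩

include hk hR in
/-- nonzero elements of k are units of R -/
lemma k_unit {x : R} (hxk : (x : T) ∈ k) (hx0 : (x : T) ≠ 0) : IsUnit x := by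
  obtain ⟨b, hbk, hb⟩ := sub_field_inv hk hxk hx0
  exact isUnit_iff_exists_inv.mpr ⟨⟨b, k_le_R hR hbk⟩, Subtype.ext (by simpa using hb)⟩

include hK hMmax hkK hk hTKM hR in
/-- LEMMA C: T-associated elements of R outside M are R-associated -/
lemma assocR_of_assocT {x y : R} (hxM : (x : T) ∉ M) (hxy : Associated (x : T) (y : T)) :
    Associated x y := by
  obtain ⟨w, hw⟩ := hxy
  obtain ⟨c, hcK, hc0, v, hv, hwd⟩ := unit_decomp hK hMmax hTKM hkK hk hR w.isUnit
  set z : R := x * v with hz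
  have hzval : (z : T) = (x : T) * (v : T) := rfl
  have hzy : (y : T) = c * (z : T) := by
    rw [hzval, ← hw, hwd]; ring
  have hzM : (z : T) ∉ M := by
    intro h
    have hyM : (y : T) ∈ M := hzy ▸ M.mul_mem_left c h
    exact hxM (by
      have : (x : T) = (y : T) * ((w⁻¹ : Tˣ) : T) := by
        rw [← hw, Units.mul_inv_cancel_right]
      rw [this]; exact M.mul_mem_right _ hyM)
  obtain ⟨e, hek, mz, hmz, hzd⟩ := (hR z).mp z.2
  have he0 : e ≠ 0 := by
    rintro rfl; exact hzM (by rw [hzd, zero_add]; exact hmz)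
  obtain ⟨f, hfk, my, hmy, hyd⟩ := (hR y).mp y.2
  have hfce : f = c * e := by
    refine KM_uniq hK hMmax (hkK hfk) (K.mul_mem hcK (hkK hek)) hmy
      (M.mul_mem_left c hmz) ?_
    rw [← hyd, hzy, hzd]; ring
  obtain ⟨d, hdk, hed⟩ := sub_field_inv hk hek he0
  have hck : c ∈ k := by
    have : c = f * d := by
      rw [hfce]
      calc c = c * (e * d) := by rw [hed, mul_one]
      _ = c * e * d := by ring
    rw [this]; exact k.mul_mem hfk hdk
  have hcu : IsUnit (⟨c, k_le_R hR hck⟩ : R) := k_unit hk hR hck hc0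
  obtain ⟨U, hU⟩ := (hcu.mul hv)
  exact ⟨U, Subtype.ext (by
    rw [show ((x * ↑U : R) : T) = (x : T) * (((↑U : R)) : T) from rfl, hU]
    push_cast
    rw [hzy, hzval]; ring)⟩

include hK hMmax hkK hk hTKM hR in
/-- LEMMA D: scaling for T-associates in M -/
lemma assocR_scale {q : T} (hq : q ∈ M) {r : R} (hqr : Associated q (r : T)) :
    ∃ c ∈ K, c ≠ 0 ∧ Associated (⟨c * q, M_le_R hR (M.mul_mem_left c hq)⟩ : R) r := by
  obtain ⟨w, hw⟩ := hqr
  obtain ⟨c, hcK, hc0, v, hv, hwd⟩ := unit_decomp hK hMmax hTKM hkK hk hR w.isUnit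
  refine ⟨c, hcK, hc0, ?_⟩
  obtain ⟨U, hU⟩ := hv
  exact ⟨U, Subtype.ext (by
    rw [show ((⟨c * q, M_le_R hR (M.mul_mem_left c hq)⟩ * ↑U : R) : T) = c * q * (((↑U : R)) : T) from
      (by push_cast; ring), hU, ← hw, hwd]
    ring)⟩

include hK hMmax hkK hk hTKM hR in
/-- irreducible in T implies irreducible in R -/
lemma irrR_of_irrT {x : R} (h : Irreducible (x : T)) : Irreducible x := by
  refine ⟨fun hu => h.not_isUnit (hu.map R.subtype), fun y z hxyz => ?_⟩
  have : (x : T) = (y : T) * (z : T) := by rw [hxyz]; push_cast; ring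
  rcases h.isUnit_or_isUnit this with hu | hu
  · exact Or.inl (unit_of_R hK hMmax hTKM hkK hk hR y hu)
  · exact Or.inr (unit_of_R hK hMmax hTKM hkK hk hR z hu)

include hK hMmax hkK hk hTKM hR in
/-- irreducible in R implies irreducible in T -/
lemma irrT_of_irrR {x : R} (hx : Irreducible x) : Irreducible (x : T) := by
  rw [irreducible_iff]
  refine ⟨fun hu => hx.not_isUnit (unit_of_R hK hMmax hTKM hkK hk hR x hu), fun y z hyz => ?_⟩
  have key : ∀ y z : T, (x : T) = y * z → z ∈ M → IsUnit y ∨ IsUnit z := by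
    intro y z hyz hzM
    by_cases hyM : y ∈ M
    · have := hx.isUnit_or_isUnit (a := (⟨y, M_le_R hR hyM⟩ : R)) (b := ⟨z, M_le_R hR hzM⟩)
        (Subtype.ext hyz)
      exact this.imp (fun h => h.map R.subtype) (fun h => h.map R.subtype)
    · obtain ⟨c, hcK, hc0, m, hm, hyd⟩ := not_mem_M_decomp hK hMmax hTKM hyM
      have h1mR : (1:T) + m ∈ R := (hR _).mpr ⟨1, k.one_mem, m, hm, rfl⟩
      have hczR : c * z ∈ R := M_le_R hR (M.mul_mem_left c hzM)
      have hfact : x = (⟨1 + m, h1mR⟩ : R) * ⟨c * z, hczR⟩ :=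
        Subtype.ext (by push_cast; rw [hyz, hyd]; ring)
      obtain ⟨c', hc'K, hcc'⟩ := sub_field_inv hK hcK hc0
      rcases hx.isUnit_or_isUnit hfact with h | h
      · left
        have hu : IsUnit ((1:T) + m) := h.map R.subtype
        have hcu : IsUnit c := isUnit_iff_exists_inv.mpr ⟨c', hcc'⟩
        rw [hyd]; exact hcu.mul hu
      · right
        have hu : IsUnit (c * z) := h.map R.subtype
        obtain ⟨w, hw⟩ := isUnit_iff_exists_inv.mp hu
        exact isUnit_iff_exists_inv.mpr ⟨c * w, by
          calc z * (c * w) = (c * z) * w := by ring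
          _ = 1 := hw⟩
  by_cases hxM : (x : T) ∈ M
  · rcases hMmax.isPrime.mem_or_mem (hyz ▸ hxM) with h | h
    · exact (key z y (by rw [hyz]; ring) h).symm
    · exact key y z hyz h
  · have hyM : y ∉ M := fun h => hxM (hyz ▸ M.mul_mem_right z h)
    have hzM : z ∉ M := fun h => hxM (hyz ▸ M.mul_mem_left y h)
    obtain ⟨c, hcK, hc0, m, hm, hyd⟩ := not_mem_M_decomp hK hMmax hTKM hyM
    obtain ⟨c', hc'K, hc'0, m', hm', hzd⟩ := not_mem_M_decomp hK hMmax hTKM hzM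
    have h1mR : (1:T) + m ∈ R := (hR _).mpr ⟨1, k.one_mem, m, hm, rfl⟩
    have h1m'R : (1:T) + m' ∈ R := (hR _).mpr ⟨1, k.one_mem, m', hm', rfl⟩
    set u : R := ⟨1 + m, h1mR⟩
    set u' : R := ⟨1 + m', h1m'R⟩
    set zR : R := u * u' with hzR
    have hx2 : (x : T) = (c * c') + (c * c') * (m + m' + m * m') := by
      rw [hyz, hyd, hzd]; ring
    obtain ⟨e, hek, mx, hmx, hxd⟩ := (hR x).mp x.2
    have hecc' : e = c * c' := by
      refine KM_uniq hK hMmax (hkK hek) (K.mul_mem hcK hc'K) hmx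
        (M.mul_mem_left (c * c') (M.add_mem (M.add_mem hm hm') (M.mul_mem_right m' hm))) ?_
      rw [← hxd, hx2]
    have hcc'k : c * c' ∈ k := hecc' ▸ hek
    have hcc'0 : c * c' ≠ 0 := mul_ne_zero hc0 hc'0
    have hcu : IsUnit (⟨c * c', k_le_R hR hcc'k⟩ : R) := k_unit hk hR hcc'k hcc'0
    have hfact : x = (⟨c * c', k_le_R hR hcc'k⟩ : R) * zR :=
      Subtype.ext (by
        rw [hx2]
        show _ = (c * c') * ((1 + m) * (1 + m'))
        ring)
    have hassoc : Associated zR x := by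
      obtain ⟨U, hU⟩ := hcu
      exact ⟨U, by rw [mul_comm zR, hU]; exact hfact.symm⟩
    have hzRirr : Irreducible zR := hassoc.symm.irreducible hx
    obtain ⟨cK', hcK', hccK'⟩ := sub_field_inv hK hcK hc0
    obtain ⟨c'K', hc'K', hcc'K'⟩ := sub_field_inv hK hc'K hc'0
    rcases hzRirr.isUnit_or_isUnit (rfl : zR = u * u') with h | h
    · left
      have hu : IsUnit ((1:T) + m) := h.map R.subtype
      rw [hyd]
      exact (isUnit_iff_exists_inv.mpr ⟨cK', hccK'⟩).mul hu
    · right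
      have hu : IsUnit ((1:T) + m') := h.map R.subtype
      rw [hzd]
      exact (isUnit_iff_exists_inv.mpr ⟨c'K', hcc'K'⟩).mul hu

include hK in
/-- units of K from nonzero elements -/
lemma K_unit_of {c : T} (hcK : c ∈ K) (hc0 : c ≠ 0) :
    ∃ u : (↥K)ˣ, ((u : ↥K) : T) = c := by
  obtain ⟨b, hbK, hcb⟩ := sub_field_inv hK hcK hc0
  exact ⟨⟨⟨c, hcK⟩, ⟨b, hbK⟩, Subtype.ext (by simpa using hcb),
    Subtype.ext (by simpa using (mul_comm c b ▸ hcb))⟩, rfl⟩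

/-- transfer map on Associates induced by the subring inclusion -/
def phiA (R : Subring T) : Associates R → Associates T :=
  Quotient.lift (fun x : R => Associates.mk (x : T))
    (fun _ _ h => Associates.mk_eq_mk_iff_associated.mpr (h.map R.subtype))

lemma phiA_mk (R : Subring T) (x : R) : phiA R (Associates.mk x) = Associates.mk (x : T) := rfl

lemma exists_multiset_preimage {α β : Type*} {f : α → β} (hf : Function.Surjective f)
    (s : Multiset β) : ∃ t : Multiset α, t.map f = s := by
  induction s using Multiset.induction with
  | empty => exact ⟨0, rfl⟩
  | cons b s ih =>
    obtain ⟨t, ht⟩ := ih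
    obtain ⟨a, ha⟩ := hf b
    exact ⟨a ::ₘ t, by rw [Multiset.map_cons, ha, ht]⟩

lemma multiset_fiber_finite {α β : Type*} (f : α → β) (P : α → Prop) (t : Multiset β)
    (h : ∀ b ∈ t, {a : α | P a ∧ f a = b}.Finite) :
    {s : Multiset α | (∀ a ∈ s, P a) ∧ s.map f = t}.Finite := by
  classical
  induction t using Multiset.induction with
  | empty =>
    apply Set.Finite.subset (Set.finite_singleton 0)
    rintro s ⟨-, hs⟩
    simpa using Multiset.map_eq_zero.mp hs
  | cons b t ih =>
    have hfin := (((h b (Multiset.mem_cons_self b t)).prod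
      (ih (fun b' hb' => h b' (Multiset.mem_cons_of_mem hb')))).image
      (fun p : α × Multiset α => p.1 ::ₘ p.2))
    apply hfin.subset
    rintro s ⟨hP, hs⟩
    obtain ⟨a, haS, hfa, ht⟩ := (Multiset.map_eq_cons f s t b).mpr hs
    exact ⟨(a, s.erase a), ⟨⟨hP a haS, hfa⟩, fun x hx => hP x (Multiset.mem_of_mem_erase hx), ht⟩,
      Multiset.cons_erase haS⟩

include hMmax in
lemma multiset_prod_mem_prime {S : Multiset T} (h : S.prod ∈ M) : ∃ x ∈ S, x ∈ M := by
  induction S using Multiset.induction with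
  | empty =>
    exact absurd (Ideal.eq_top_iff_one M |>.mpr (by simpa using h)) hMmax.ne_top
  | cons a S ih =>
    rw [Multiset.prod_cons] at h
    rcases hMmax.isPrime.mem_or_mem h with h | h
    · exact ⟨a, Multiset.mem_cons_self a S, h⟩
    · obtain ⟨x, hx, hxM⟩ := ih h
      exact ⟨x, Multiset.mem_cons_of_mem hx, hxM⟩

include hK hMmax hkK hk hTKM hR in
lemma mk_eq_of_coset {q : T} (hq : q ∈ M) {u v : (↥K)ˣ}
    (h : u⁻¹ * v ∈ (Units.map (Subring.inclusion hkK).toMonoidHom).range) :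
    Associates.mk (⟨((u : ↥K) : T) * q, M_le_R hR (M.mul_mem_left _ hq)⟩ : R) =
      Associates.mk (⟨((v : ↥K) : T) * q, M_le_R hR (M.mul_mem_left _ hq)⟩ : R) := by
  obtain ⟨ω, hω⟩ := h
  have hv : v = u * Units.map (Subring.inclusion hkK).toMonoidHom ω := by
    rw [hω, mul_inv_cancel_left]
  have hval : ((v : ↥K) : T) = ((u : ↥K) : T) * ((ω : ↥k) : T) := by
    rw [hv]; rfl
  have hω1 : ((ω : ↥k) : T) * (((ω⁻¹ : (↥k)ˣ) : ↥k) : T) = 1 := by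
    exact_mod_cast congrArg Subtype.val ω.mul_inv
  have hω0 : ((ω : ↥k) : T) ≠ 0 := fun h0 => one_ne_zero (by rw [← hω1, h0, zero_mul])
  have hu : IsUnit (⟨((ω : ↥k) : T), k_le_R hR (ω : ↥k).2⟩ : R) :=
    k_unit hk hR (ω : ↥k).2 hω0
  obtain ⟨U, hU⟩ := hu
  refine Associates.mk_eq_mk_iff_associated.mpr ⟨U, Subtype.ext ?_⟩
  rw [show ((⟨((u : ↥K) : T) * q, M_le_R hR (M.mul_mem_left _ hq)⟩ * ↑U : R) : T) =
    (((u : ↥K) : T) * q) * (((↑U : R)) : T) from rfl, hU]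
  show ((u : ↥K) : T) * q * ((ω : ↥k) : T) = ((v : ↥K) : T) * q
  rw [hval]; ring

include hK hMmax hkK hk hTKM hR in
lemma coset_of_mk_eq {q : T} (hq : q ∈ M) (hq0 : q ≠ 0) {u v : (↥K)ˣ}
    (h : Associates.mk (⟨((u : ↥K) : T) * q, M_le_R hR (M.mul_mem_left _ hq)⟩ : R) =
      Associates.mk (⟨((v : ↥K) : T) * q, M_le_R hR (M.mul_mem_left _ hq)⟩ : R)) :
    u⁻¹ * v ∈ (Units.map (Subring.inclusion hkK).toMonoidHom).range := by
  obtain ⟨U, hU⟩ := Associates.mk_eq_mk_iff_associated.mp h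
  have hval : ((u : ↥K) : T) * q * (((↑U : R)) : T) = ((v : ↥K) : T) * q :=
    congrArg Subtype.val hU
  have hcancel : ((u : ↥K) : T) * (((↑U : R)) : T) = ((v : ↥K) : T) :=
    mul_left_cancel₀ hq0 (by linear_combination hval)
  have huu : ((u : ↥K) : T) * (((u⁻¹ : (↥K)ˣ) : ↥K) : T) = 1 := by
    exact_mod_cast congrArg Subtype.val u.mul_inv
  have hvv : (((v⁻¹ : (↥K)ˣ) : ↥K) : T) * ((v : ↥K) : T) = 1 := by
    exact_mod_cast congrArg Subtype.val v.inv_mul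
  have hUval : (((↑U : R)) : T) = (((u⁻¹ : (↥K)ˣ) : ↥K) : T) * ((v : ↥K) : T) := by
    calc (((↑U : R)) : T) = ((((u⁻¹ : (↥K)ˣ) : ↥K) : T) * ((u : ↥K) : T)) * (((↑U : R)) : T) := by
          rw [mul_comm (((u⁻¹ : (↥K)ˣ) : ↥K) : T), huu, one_mul]
    _ = (((u⁻¹ : (↥K)ˣ) : ↥K) : T) * (((u : ↥K) : T) * (((↑U : R)) : T)) := by ring
    _ = _ := by rw [hcancel]
  have hUU : (((↑U : R)) : T) * (((↑(U⁻¹) : R)) : T) = 1 := by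
    exact_mod_cast congrArg Subtype.val U.mul_inv
  have hUinvval : (((↑(U⁻¹) : R)) : T) = (((v⁻¹ : (↥K)ˣ) : ↥K) : T) * ((u : ↥K) : T) := by
    have h2 : ((((u⁻¹ : (↥K)ˣ) : ↥K) : T) * ((v : ↥K) : T)) * (((↑(U⁻¹) : R)) : T) = 1 := by
      rw [← hUval]; exact hUU
    calc (((↑(U⁻¹) : R)) : T)
        = ((((v⁻¹ : (↥K)ˣ) : ↥K) : T) * ((v : ↥K) : T)) * (((↑(U⁻¹) : R)) : T) := by
          rw [hvv, one_mul]
    _ = (((v⁻¹ : (↥K)ˣ) : ↥K) : T) * (((v : ↥K) : T) * (((↑(U⁻¹) : R)) : T)) := by ring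
    _ = (((v⁻¹ : (↥K)ˣ) : ↥K) : T) * ((((u : ↥K) : T) * (((u⁻¹ : (↥K)ˣ) : ↥K) : T))
          * (((v : ↥K) : T) * (((↑(U⁻¹) : R)) : T))) := by rw [huu, one_mul]
    _ = (((v⁻¹ : (↥K)ˣ) : ↥K) : T) * ((u : ↥K) : T) *
          (((((u⁻¹ : (↥K)ˣ) : ↥K) : T) * ((v : ↥K) : T)) * (((↑(U⁻¹) : R)) : T)) := by ring
    _ = _ := by rw [h2, mul_one]
  have hUk : (((↑U : R)) : T) ∈ k :=
    mem_k_of_mem_K_R hK hMmax hkK hR (↑U : R).2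
      (hUval ▸ K.mul_mem ((u⁻¹ : (↥K)ˣ) : ↥K).2 ((v : ↥K)).2)
  have hUinvk : (((↑(U⁻¹) : R)) : T) ∈ k :=
    mem_k_of_mem_K_R hK hMmax hkK hR (↑(U⁻¹) : R).2
      (hUinvval ▸ K.mul_mem (((v⁻¹ : (↥K)ˣ) : ↥K)).2 ((u : ↥K)).2)
  refine ⟨⟨⟨(((↑U : R)) : T), hUk⟩, ⟨(((↑(U⁻¹) : R)) : T), hUinvk⟩,
    Subtype.ext (by simpa using hUU),
    Subtype.ext (by
      show (((↑(U⁻¹) : R)) : T) * (((↑U : R)) : T) = 1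
      rw [mul_comm]; exact hUU)⟩,
    Units.ext (Subtype.ext ?_)⟩
  show (((↑U : R)) : T) = (((u⁻¹ * v : (↥K)ˣ) : ↥K) : T)
  rw [hUval]; rfl

include hK hMmax hkK hk hTKM hR in
lemma fiber_finite
    (hfin : Finite ((↥K)ˣ ⧸ (Units.map (Subring.inclusion hkK).toMonoidHom).range))
    {q : T} (hq : Irreducible q) :
    {x : Associates R | Irreducible x ∧ phiA R x = Associates.mk q}.Finite := by
  by_cases hqM : q ∈ M
  · set H := (Units.map (Subring.inclusion hkK).toMonoidHom).range with hH
    let g : (↥K)ˣ → Associates R := fun u =>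
      Associates.mk (⟨((u : ↥K) : T) * q, M_le_R hR (M.mul_mem_left _ hqM)⟩ : R)
    have gwd : ∀ u v : (↥K)ˣ, (QuotientGroup.leftRel H) u v → g u = g v := fun u v huv =>
      mk_eq_of_coset hK hMmax hTKM hkK hk hR hqM (QuotientGroup.leftRel_apply.mp huv)
    let gbar : ((↥K)ˣ ⧸ H) → Associates R := Quotient.lift g gwd
    apply (Set.finite_range gbar).subset
    rintro x ⟨hxirr, hxphi⟩
    obtain ⟨r, rfl⟩ := Associates.mk_surjective x
    rw [phiA_mk] at hxphi
    have hassoc : Associated q ((r : T)) := (Associates.mk_eq_mk_iff_associated.mp hxphi).symm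
    obtain ⟨c, hcK, hc0, hcr⟩ := assocR_scale hK hMmax hTKM hkK hk hR hqM hassoc
    obtain ⟨uK, huK⟩ := K_unit_of hK hcK hc0
    refine ⟨QuotientGroup.mk uK, ?_⟩
    show g uK = Associates.mk r
    have heq : (⟨((uK : ↥K) : T) * q, M_le_R hR (M.mul_mem_left _ hqM)⟩ : R)
        = ⟨c * q, M_le_R hR (M.mul_mem_left c hqM)⟩ := Subtype.ext (by rw [huK])
    show Associates.mk (⟨((uK : ↥K) : T) * q, M_le_R hR (M.mul_mem_left _ hqM)⟩ : R)
      = Associates.mk r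
    rw [heq]
    exact Associates.mk_eq_mk_iff_associated.mpr hcr
  · apply Set.Subsingleton.finite
    rintro x ⟨hx, hxq⟩ x' ⟨hx', hx'q⟩
    obtain ⟨r, rfl⟩ := Associates.mk_surjective x
    obtain ⟨r', rfl⟩ := Associates.mk_surjective x'
    rw [phiA_mk] at hxq hx'q
    have h1 : Associated (r : T) q := Associates.mk_eq_mk_iff_associated.mp hxq
    have h2 : Associated (r : T) (r' : T) :=
      h1.trans (Associates.mk_eq_mk_iff_associated.mp hx'q).symm
    have hrM : (r : T) ∉ M := by
      intro h
      obtain ⟨w, hw⟩ := h1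
      exact hqM (hw ▸ M.mul_mem_right _ h)
    exact Associates.mk_eq_mk_iff_associated.mpr
      (assocR_of_assocT hK hMmax hTKM hkK hk hR hrM h2)

include hK hMmax hkK hk hTKM hR in
/-- CONVERSION: any T-factorization of an element of R can be converted to an R-factorization
with the same classes in Associates T -/
lemma conv_lemma {a : R} {S : Multiset T} (hS : ∀ q ∈ S, Irreducible q)
    (hprod : Associated S.prod (a : T)) :
    ∃ S' : Multiset R, (∀ x ∈ S', Irreducible ((x : T))) ∧ Associated S'.prod a ∧
      S'.map (fun x : R => Associates.mk (x : T)) = S.map Associates.mk := by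
  classical
  -- step 1: representatives in R
  have step1 : ∀ S : Multiset T, (∀ q ∈ S, Irreducible q) →
      ∃ S₀ : Multiset R, (∀ x ∈ S₀, Irreducible ((x : T))) ∧
        S₀.map (fun x : R => Associates.mk (x : T)) = S.map Associates.mk := by
    intro S
    induction S using Multiset.induction with
    | empty => exact fun _ => ⟨0, by simp, by simp⟩
    | cons q S ih =>
      intro hS
      obtain ⟨S₀, hS₀irr, hS₀map⟩ := ih (fun q' hq' => hS q' (Multiset.mem_cons_of_mem hq'))
      have hq : Irreducible q := hS q (Multiset.mem_cons_self q S)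
      by_cases hqM : q ∈ M
      · refine ⟨⟨q, M_le_R hR hqM⟩ ::ₘ S₀, ?_, ?_⟩
        · intro x hx
          rcases Multiset.mem_cons.mp hx with rfl | hx
          · exact hq
          · exact hS₀irr x hx
        · rw [Multiset.map_cons, Multiset.map_cons, hS₀map]
      · obtain ⟨c, hcK, hc0, m, hm, hqd⟩ := not_mem_M_decomp hK hMmax hTKM hqM
        have h1mR : (1:T) + m ∈ R := (hR _).mpr ⟨1, k.one_mem, m, hm, rfl⟩
        have hcu : IsUnit c := by
          obtain ⟨c', _, hcc'⟩ := sub_field_inv hK hcK hc0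
          exact isUnit_iff_exists_inv.mpr ⟨c', hcc'⟩
        have hassoc : Associated ((1:T) + m) q := by
          obtain ⟨cu, hcu'⟩ := hcu
          exact ⟨cu, by rw [hcu', hqd]; ring⟩
        refine ⟨⟨1 + m, h1mR⟩ ::ₘ S₀, ?_, ?_⟩
        · intro x hx
          rcases Multiset.mem_cons.mp hx with rfl | hx
          · exact hassoc.symm.irreducible hq
          · exact hS₀irr x hx
        · rw [Multiset.map_cons, Multiset.map_cons, hS₀map]
          congr 1
          exact Associates.mk_eq_mk_iff_associated.mpr hassoc
  obtain ⟨S₀, hS₀irr, hS₀map⟩ := step1 S hS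
  have hprod0 : Associated ((S₀.prod : R) : T) S.prod := by
    rw [← Associates.mk_eq_mk_iff_associated]
    have h1 : Associates.mk ((S₀.prod : R) : T)
        = (S₀.map (fun x : R => Associates.mk (x : T))).prod := by
      rw [show ((S₀.prod : R) : T) = (S₀.map (fun x : R => (x : T))).prod from
        map_multiset_prod R.subtype S₀, ← Associates.prod_mk, Multiset.map_map]
      rfl
    rw [h1, hS₀map, Associates.prod_mk]
  have hprodA : Associated ((S₀.prod : R) : T) (a : T) := hprod0.trans hprod
  by_cases haM : (a : T) ∈ M
  · have hPM : ∃ xv ∈ S₀.map (fun x : R => (x : T)), xv ∈ M := by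
      apply multiset_prod_mem_prime hMmax
      rw [← (show ((S₀.prod : R) : T) = (Multiset.map (fun x : R => (x : T)) S₀).prod from
        map_multiset_prod R.subtype S₀)]
      obtain ⟨w, hw⟩ := hprodA.symm
      exact hw ▸ M.mul_mem_right _ haM
    obtain ⟨xv, hxvS, hxvM⟩ := hPM
    obtain ⟨x, hxS, rfl⟩ := Multiset.mem_map.mp hxvS
    set P := S₀.erase x with hPdef
    have hS₀eq : S₀ = x ::ₘ P := (Multiset.cons_erase hxS).symm
    obtain ⟨w, hw⟩ := hprodA
    obtain ⟨c, hcK, hc0, v, hv, hwd⟩ := unit_decomp hK hMmax hTKM hkK hk hR w.isUnit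
    have hcxR : c * (x : T) ∈ R := M_le_R hR (M.mul_mem_left c hxvM)
    have hcu : IsUnit c := by
      obtain ⟨c', _, hcc'⟩ := sub_field_inv hK hcK hc0
      exact isUnit_iff_exists_inv.mpr ⟨c', hcc'⟩
    have hxx' : Associated ((x : R) : T) ((⟨c * (x : T), hcxR⟩ : R) : T) := by
      obtain ⟨cu, hcu'⟩ := hcu
      exact ⟨cu, by rw [hcu']; push_cast; ring⟩
    have hvaleq : (((⟨c * (x : T), hcxR⟩ ::ₘ P).prod : R) : T) = c * ((S₀.prod : R) : T) := by
      rw [Multiset.prod_cons, hS₀eq, Multiset.prod_cons]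
      push_cast; ring
    refine ⟨⟨c * (x : T), hcxR⟩ ::ₘ P, ?_, ?_, ?_⟩
    · intro y hy
      rcases Multiset.mem_cons.mp hy with rfl | hy
      · exact hxx'.irreducible (hS₀irr x hxS)
      · exact hS₀irr y (hS₀eq ▸ Multiset.mem_cons_of_mem hy)
    · obtain ⟨U, hU⟩ := hv
      refine ⟨U, Subtype.ext ?_⟩
      rw [show (((⟨c * (x : T), hcxR⟩ ::ₘ P).prod * ↑U : R) : T)
        = (((⟨c * (x : T), hcxR⟩ ::ₘ P).prod : R) : T) * ((↑U : R) : T) from rfl, hU, hvaleq]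
      rw [← hw, hwd]; ring
    · rw [hS₀eq, Multiset.map_cons] at hS₀map
      rw [Multiset.map_cons, ← hS₀map]
      congr 1
      exact (Associates.mk_eq_mk_iff_associated.mpr hxx').symm
  · have hprodM : ((S₀.prod : R) : T) ∉ M := by
      intro h
      obtain ⟨w, hw⟩ := hprodA
      exact haM (hw ▸ M.mul_mem_right _ h)
    exact ⟨S₀, hS₀irr, assocR_of_assocT hK hMmax hTKM hkK hk hR hprodM hprodA, hS₀map⟩

end Aux

/-- Let `T` be an integral domain, `K` a subring of `T` that is a field, and
`M` a nonzero maximal ideal of `T` such that `T = K + M`. Let `k` be a subfield of `K` and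
let `R = k + M` (a subring of `T`). If `M` contains an irreducible element of `T`, then `R`
is a U-FFD if and only if `T` is a U-FFD and the group `K^×/k^×` is finite. -/
theorem uffd_DplusM_with_irreducible (T : Type*) [CommRing T] [IsDomain T]
    (K : Subring T) (hK : IsField K)
    (M : Ideal T) (hMmax : M.IsMaximal) (hM0 : M ≠ ⊥)
    (hTKM : ∀ t : T, ∃ a ∈ K, ∃ m ∈ M, t = a + m)
    (k : Subring T) (hkK : k ≤ K) (hk : IsField k)
    (R : Subring T) (hR : ∀ x : T, x ∈ R ↔ ∃ a ∈ k, ∃ m ∈ M, x = a + m)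
    (hirr : ∃ p ∈ M, Irreducible p) :
    IsUFFD R ↔
      IsUFFD T ∧
        Finite ((↥K)ˣ ⧸ (Units.map (Subring.inclusion hkK).toMonoidHom).range) := by
  constructor
  · intro hUR
    constructor
    · -- T is a U-FFD
      intro t ht0 hatomic
      obtain ⟨S, hSirr, hSprod⟩ := hatomic
      obtain ⟨a, haassoc⟩ : ∃ a : R, Associated t ((a : T)) := by
        by_cases htM : t ∈ M
        · exact ⟨⟨t, M_le_R hR htM⟩, Associated.refl t⟩
        · obtain ⟨c, hcK, hc0, m, hm, htd⟩ := not_mem_M_decomp hK hMmax hTKM htM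
          have h1mR : (1:T) + m ∈ R := (hR _).mpr ⟨1, k.one_mem, m, hm, rfl⟩
          have hcu : IsUnit c := by
            obtain ⟨c', _, hcc'⟩ := sub_field_inv hK hcK hc0
            exact isUnit_iff_exists_inv.mpr ⟨c', hcc'⟩
          obtain ⟨cu, hcu'⟩ := hcu
          exact ⟨⟨1 + m, h1mR⟩, Associated.symm ⟨cu, by rw [hcu', htd]; ring⟩⟩
      have ha0 : (a : T) ≠ 0 := by
        intro h
        obtain ⟨w, hw⟩ := haassoc.symm
        exact ht0 (by rw [← hw, h, zero_mul])
      have haR0 : a ≠ 0 := fun h => ha0 (by rw [h]; rfl)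
      obtain ⟨S', hS'irr, hS'assoc, hS'map⟩ :=
        conv_lemma hK hMmax hTKM hkK hk hR hSirr (hSprod.trans haassoc)
      have hatomR : IsAtomicElem a :=
        ⟨S', fun x hx => irrR_of_irrT hK hMmax hTKM hkK hk hR (hS'irr x hx), hS'assoc⟩
      have hfinR := hUR a haR0 hatomR
      have hmk : Associates.mk t = Associates.mk ((a : T)) :=
        Associates.mk_eq_mk_iff_associated.mpr haassoc
      have hsubset : FactorizationsOf t ⊆
          (fun s : Multiset (Associates R) => s.map (phiA R)) '' (FactorizationsOf a) := by
        rintro ts ⟨htsirr, htsprod⟩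
        obtain ⟨S₁, hS₁⟩ := exists_multiset_preimage Associates.mk_surjective ts
        have hS₁irr : ∀ q ∈ S₁, Irreducible q := by
          intro q hq
          refine Associates.irreducible_mk.mp (htsirr _ ?_)
          rw [← hS₁]; exact Multiset.mem_map_of_mem _ hq
        have hS₁prod : Associated S₁.prod ((a : T)) := by
          rw [← Associates.mk_eq_mk_iff_associated, ← hmk, ← htsprod, ← hS₁,
            Associates.prod_mk]
        obtain ⟨S₂, hS₂irr, hS₂assoc, hS₂map⟩ :=
          conv_lemma hK hMmax hTKM hkK hk hR hS₁irr hS₁prod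
        refine ⟨S₂.map Associates.mk, ⟨?_, ?_⟩, ?_⟩
        · intro pt hpt
          obtain ⟨x, hx, rfl⟩ := Multiset.mem_map.mp hpt
          exact Associates.irreducible_mk.mpr
            (irrR_of_irrT hK hMmax hTKM hkK hk hR (hS₂irr x hx))
        · rw [Associates.prod_mk]
          exact Associates.mk_eq_mk_iff_associated.mpr hS₂assoc
        · show (Multiset.map Associates.mk S₂).map (phiA R) = ts
          rw [Multiset.map_map]
          calc S₂.map (phiA R ∘ Associates.mk)
              = S₂.map (fun x : R => Associates.mk (x : T)) := rfl
          _ = S₁.map Associates.mk := hS₂map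
          _ = ts := hS₁
      exact (hfinR.image _).subset hsubset
    · -- K^x / k^x is finite
      obtain ⟨p, hpM, hpirr⟩ := hirr
      have hp0 : p ≠ 0 := hpirr.ne_zero
      set pR : R := ⟨p, M_le_R hR hpM⟩ with hpRdef
      have hpR0 : pR ≠ 0 := fun h => hp0 (congrArg Subtype.val h)
      have hpRirr : Irreducible pR := irrR_of_irrT hK hMmax hTKM hkK hk hR hpirr
      have haa0 : pR * pR ≠ 0 := mul_ne_zero hpR0 hpR0
      have hatom : IsAtomicElem (pR * pR) := by
        refine ⟨pR ::ₘ {pR}, ?_, ?_⟩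
        · intro x hx
          rcases Multiset.mem_cons.mp hx with rfl | hx
          · exact hpRirr
          · rwa [Multiset.mem_singleton.mp hx]
        · rw [Multiset.prod_cons, Multiset.prod_singleton]
          exact Associated.refl _
      have hfinF := hUR _ haa0 hatom
      have hEfin : (⋃ s ∈ FactorizationsOf (pR * pR), {x : Associates R | x ∈ s}).Finite :=
        hfinF.biUnion (fun s _ => s.finite_toSet)
      set E := ⋃ s ∈ FactorizationsOf (pR * pR), {x : Associates R | x ∈ s} with hE
      set H := (Units.map (Subring.inclusion hkK).toMonoidHom).range with hHdef
      let g : (↥K)ˣ → Associates R := fun u =>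
        Associates.mk ⟨((u : ↥K) : T) * p, M_le_R hR (M.mul_mem_left _ hpM)⟩
      have gwd : ∀ u v : (↥K)ˣ, (QuotientGroup.leftRel H) u v → g u = g v := fun u v huv =>
        mk_eq_of_coset hK hMmax hTKM hkK hk hR hpM (QuotientGroup.leftRel_apply.mp huv)
      let gbar : ((↥K)ˣ ⧸ H) → Associates R := Quotient.lift g gwd
      have hginj : Function.Injective gbar := by
        rintro ⟨u⟩ ⟨v⟩ h
        exact (QuotientGroup.eq (s := H)).mpr
          (coset_of_mk_eq hK hMmax hTKM hkK hk hR hpM hp0 h)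
      have hmem : ∀ u : (↥K)ˣ, g u ∈ E := by
        intro u
        have huu1 : ((u : ↥K) : T) * (((u⁻¹ : (↥K)ˣ) : ↥K) : T) = 1 := by
          exact_mod_cast congrArg Subtype.val u.mul_inv
        have hKu : IsUnit ((u : ↥K) : T) := isUnit_iff_exists_inv.mpr ⟨_, huu1⟩
        have hKu' : IsUnit (((u⁻¹ : (↥K)ˣ) : ↥K) : T) :=
          isUnit_iff_exists_inv.mpr ⟨((u : ↥K) : T), by rw [mul_comm]; exact huu1⟩
        have hirr1 : Irreducible (((u : ↥K) : T) * p) := by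
          obtain ⟨cu, hcu'⟩ := hKu
          exact Associated.irreducible
            (⟨cu, by rw [hcu']; ring⟩ : Associated p (((u : ↥K) : T) * p)) hpirr
        have hirr2 : Irreducible ((((u⁻¹ : (↥K)ˣ) : ↥K) : T) * p) := by
          obtain ⟨cu, hcu'⟩ := hKu'
          exact Associated.irreducible (⟨cu, by rw [hcu']; ring⟩ :
            Associated p ((((u⁻¹ : (↥K)ˣ) : ↥K) : T) * p)) hpirr
        refine Set.mem_biUnion
          (?_ : (g u ::ₘ {g u⁻¹}) ∈ FactorizationsOf (pR * pR)) ?_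
        · constructor
          · intro x hx
            rcases Multiset.mem_cons.mp hx with rfl | hx
            · exact Associates.irreducible_mk.mpr
                (irrR_of_irrT hK hMmax hTKM hkK hk hR hirr1)
            · rw [Multiset.mem_singleton.mp hx]
              exact Associates.irreducible_mk.mpr
                (irrR_of_irrT hK hMmax hTKM hkK hk hR hirr2)
          · rw [Multiset.prod_cons, Multiset.prod_singleton]
            show Associates.mk _ * Associates.mk _ = _
            rw [Associates.mk_mul_mk]
            congr 1
            refine Subtype.ext ?_
            show (((u : ↥K) : T) * p) * ((((u⁻¹ : (↥K)ˣ) : ↥K) : T) * p) = p * p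
            calc (((u : ↥K) : T) * p) * ((((u⁻¹ : (↥K)ˣ) : ↥K) : T) * p)
                = (((u : ↥K) : T) * (((u⁻¹ : (↥K)ˣ) : ↥K) : T)) * (p * p) := by ring
            _ = p * p := by rw [huu1, one_mul]
        · show g u ∈ g u ::ₘ {g u⁻¹}
          exact Multiset.mem_cons_self _ _
      have hmem' : ∀ d : (↥K)ˣ ⧸ H, gbar d ∈ E := by
        rintro ⟨u⟩; exact hmem u
      have : Finite E := hEfin.to_subtype
      exact Finite.of_injective (fun d => (⟨gbar d, hmem' d⟩ : E))
        (fun d d' h => hginj (congrArg Subtype.val h))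
  · rintro ⟨hUT, hfin⟩
    intro a ha0 hatom
    have haT0 : (a : T) ≠ 0 := fun h => ha0 (Subtype.ext h)
    obtain ⟨S, hSirr, hSassoc⟩ := hatom
    have hatomT : IsAtomicElem ((a : T)) := by
      refine ⟨S.map (fun x : R => (x : T)), ?_, ?_⟩
      · intro q hq
        obtain ⟨x, hx, rfl⟩ := Multiset.mem_map.mp hq
        exact irrT_of_irrR hK hMmax hTKM hkK hk hR (hSirr x hx)
      · rw [← (show ((S.prod : R) : T) = (Multiset.map (fun x : R => (x : T)) S).prod from
          map_multiset_prod R.subtype S)]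
        exact hSassoc.map R.subtype
    have hFT := hUT _ haT0 hatomT
    have hsub : FactorizationsOf a ⊆ ⋃ ts ∈ FactorizationsOf ((a : T)),
        {s : Multiset (Associates R) | (∀ p ∈ s, Irreducible p) ∧ s.map (phiA R) = ts} := by
      rintro s ⟨hsirr, hsprod⟩
      refine Set.mem_biUnion (?_ : s.map (phiA R) ∈ FactorizationsOf ((a : T)))
        ⟨hsirr, rfl⟩
      obtain ⟨S₁, rfl⟩ := exists_multiset_preimage Associates.mk_surjective s
      constructor
      · intro pt hpt
        obtain ⟨pr, hpr, rfl⟩ := Multiset.mem_map.mp hpt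
        obtain ⟨x, hx, rfl⟩ := Multiset.mem_map.mp hpr
        rw [phiA_mk]
        exact Associates.irreducible_mk.mpr (irrT_of_irrR hK hMmax hTKM hkK hk hR
          (Associates.irreducible_mk.mp (hsirr _ (Multiset.mem_map_of_mem _ hx))))
      · rw [Multiset.map_map]
        have hcomp : (S₁.map (phiA R ∘ Associates.mk)).prod
            = Associates.mk ((S₁.prod : T)) := by
          show (S₁.map (fun x : R => Associates.mk (x : T))).prod = _
          rw [show ((S₁.prod : T)) = (Multiset.map (fun x : R => (x : T)) S₁).prod from
            map_multiset_prod R.subtype S₁, ← Associates.prod_mk, Multiset.map_map]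
          rfl
        rw [hcomp]
        have h2 : Associated (S₁.prod) a :=
          Associates.mk_eq_mk_iff_associated.mp (Associates.prod_mk.symm.trans hsprod)
        exact Associates.mk_eq_mk_iff_associated.mpr (h2.map R.subtype)
    refine Set.Finite.subset (hFT.biUnion ?_) hsub
    intro ts hts
    apply multiset_fiber_finite (phiA R) Irreducible ts
    intro b hb
    have hbirr := hts.1 b hb
    obtain ⟨q, rfl⟩ := Associates.mk_surjective b
    exact fiber_finite hK hMmax hTKM hkK hk hR hfin (Associates.irreducible_mk.mp hbirr)
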